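/- Let S and S' be linear subspaces of ℝⁿ such that the sets of componentwise sign vectors coincide: {(sign(x₁), …, sign(xₙ)) : x ∈ S} = {(sign(x'₁), …, sign(x'ₙ)) : x' ∈ S'}. Then there exists a homeomorphism h : S → S' such that sign(h(x)ᵢ) = sign(xᵢ) for every x ∈ S and every coordinate i. -/

import Mathlib

open Finset

namespace SignHomeo


variable {n : ℕ}

noncomputable def sgn (x : Fin n → ℝ) : Fin n → SignType := fun i => SignType.sign (x i)

def Conf (v w : Fin n → SignType) : Prop := ∀ i, v i = 0 ∨ v i = w i

def supp (v : Fin n → SignType) : Finset (Fin n) :=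
  Finset.univ.filter (fun i => v i ≠ 0)

lemma mem_supp {v : Fin n → SignType} {i : Fin n} : i ∈ supp v ↔ v i ≠ 0 := by
  simp [supp]

lemma sgn_eq_zero_iff {x : Fin n → ℝ} : sgn x = 0 ↔ x = 0 := by
  constructor
  · intro h; funext i
    have := congrFun h i
    simpa [sgn, sign_eq_zero_iff] using this
  · rintro rfl; funext i; simp [sgn]

lemma Conf.refl (v : Fin n → SignType) : Conf v v := fun _ => Or.inr rfl

lemma Conf.supp_subset {v w : Fin n → SignType} (h : Conf v w) : supp v ⊆ supp w := by
  intro i hi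
  rw [mem_supp] at hi ⊢
  rcases h i with h' | h'
  · exact absurd h' hi
  · rw [← h']; exact hi

lemma Conf.eq_of_supp_subset {v w : Fin n → SignType} (h : Conf v w)
    (hs : supp w ⊆ supp v) : v = w := by
  funext i
  rcases h i with h' | h'
  · by_cases hw : w i = 0
    · rw [h', hw]
    · exact absurd (hs (mem_supp.2 hw)) (by simp [mem_supp, h'])
  · exact h'

lemma Conf.ssubset_of_ne {v w : Fin n → SignType} (h : Conf v w) (hne : v ≠ w) :
    supp v ⊂ supp w :=
  ⟨h.supp_subset, fun hs => hne (h.eq_of_supp_subset hs)⟩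

lemma Conf.trans {u v w : Fin n → SignType} (h1 : Conf u v) (h2 : Conf v w) : Conf u w := by
  intro i
  rcases h1 i with h | h
  · exact Or.inl h
  · rcases h2 i with h' | h'
    · exact Or.inl (h.trans h')
    · exact Or.inr (h.trans h')

lemma sign_add_aux {a b : ℝ} {s : SignType} (ha : SignType.sign a = s)
    (hb : SignType.sign b = 0 ∨ SignType.sign b = s) :
    SignType.sign (a + b) = s := by
  cases s with
  | zero =>
      rw [show (SignType.zero : SignType) = 0 from rfl] at ha hb ⊢
      rw [sign_eq_zero_iff] at ha
      rcases hb with hb | hb <;> rw [sign_eq_zero_iff] at hb <;> simp [ha, hb]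
  | pos =>
      rw [show (SignType.pos : SignType) = 1 from rfl] at ha hb ⊢
      rw [sign_eq_one_iff] at ha ⊢
      rcases hb with hb | hb
      · rw [sign_eq_zero_iff] at hb; linarith
      · rw [sign_eq_one_iff] at hb; linarith
  | neg =>
      rw [show (SignType.neg : SignType) = -1 from rfl] at ha hb ⊢
      rw [sign_eq_neg_one_iff] at ha ⊢
      rcases hb with hb | hb
      · rw [sign_eq_zero_iff] at hb; linarith
      · rw [sign_eq_neg_one_iff] at hb; linarith

/-- adding something conformally below doesn't change the sign vector -/
lemma sgn_add_of_conf {x y : Fin n → ℝ} {v : Fin n → SignType}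
    (hx : sgn x = v) (hy : Conf (sgn y) v) : sgn (x + y) = v := by
  funext i
  exact sign_add_aux (congrFun hx i)
    (by rcases hy i with h | h
        · exact Or.inl h
        · exact Or.inr h)

lemma sgn_smul_of_pos {x : Fin n → ℝ} {c : ℝ} (hc : 0 < c) : sgn (c • x) = sgn x := by
  funext i
  show SignType.sign (c * x i) = SignType.sign (x i)
  rw [sign_mul, sign_pos hc, one_mul]

open Classical in
noncomputable def pick (W : Submodule ℝ (Fin n → ℝ)) (v : Fin n → SignType) :
    Fin n → ℝ :=
  if h : ∃ x ∈ W, sgn x = v then h.choose else 0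

lemma pick_mem {W : Submodule ℝ (Fin n → ℝ)} {v : Fin n → SignType}
    (h : ∃ x ∈ W, sgn x = v) : pick W v ∈ W := by
  classical rw [pick, dif_pos h]; exact h.choose_spec.1

lemma pick_sgn {W : Submodule ℝ (Fin n → ℝ)} {v : Fin n → SignType}
    (h : ∃ x ∈ W, sgn x = v) : sgn (pick W v) = v := by
  classical rw [pick, dif_pos h]; exact h.choose_spec.2

noncomputable def minRatio (x b : Fin n → ℝ) (v : Fin n → SignType) : ℝ :=
  if h : (supp v).Nonempty then (supp v).inf' h (fun i => x i / b i) else 0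

lemma supp_nonempty_of_ne {v : Fin n → SignType} (hv : v ≠ 0) : (supp v).Nonempty := by
  rcases Function.ne_iff.1 hv with ⟨i, hi⟩
  exact ⟨i, mem_supp.2 hi⟩

lemma sign_or_iff_pos {t : ℝ} :
    (SignType.sign t = 0 ∨ SignType.sign t = 1) ↔ 0 ≤ t := by
  rw [sign_eq_zero_iff, sign_eq_one_iff]
  constructor
  · rintro (h | h) <;> [exact le_of_eq h.symm; exact le_of_lt h]
  · intro h; rcases eq_or_lt_of_le h with h' | h'
    · exact Or.inl h'.symm
    · exact Or.inr h'

lemma sign_or_iff_neg {t : ℝ} :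
    (SignType.sign t = 0 ∨ SignType.sign t = -1) ↔ t ≤ 0 := by
  rw [sign_eq_zero_iff, sign_eq_neg_one_iff]
  constructor
  · rintro (h | h) <;> [exact le_of_eq h; exact le_of_lt h]
  · intro h; rcases eq_or_lt_of_le h with h' | h'
    · exact Or.inl h'
    · exact Or.inr h'

lemma ratio_pos {x b : Fin n → ℝ} {v : Fin n → SignType} (hx : sgn x = v)
    (hb : sgn b = v) {i : Fin n} (hi : i ∈ supp v) : 0 < x i / b i := by
  have hxi : SignType.sign (x i) = v i := congrFun hx i
  have hbi : SignType.sign (b i) = v i := congrFun hb i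
  rw [mem_supp] at hi
  rw [div_pos_iff]
  cases hvi : v i with
  | zero => exact absurd hvi hi
  | pos =>
      rw [hvi, show (SignType.pos : SignType) = 1 from rfl, sign_eq_one_iff] at hxi hbi
      exact Or.inl ⟨hxi, hbi⟩
  | neg =>
      rw [hvi, show (SignType.neg : SignType) = -1 from rfl, sign_eq_neg_one_iff] at hxi hbi
      exact Or.inr ⟨hxi, hbi⟩

lemma ratio_bound_iff {x b : Fin n → ℝ} {v : Fin n → SignType} (hx : sgn x = v)
    (hb : sgn b = v) {i : Fin n} (hi : i ∈ supp v) (μ : ℝ) :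
    (SignType.sign (x i - μ * b i) = 0 ∨ SignType.sign (x i - μ * b i) = v i) ↔
      μ ≤ x i / b i := by
  have hxi : SignType.sign (x i) = v i := congrFun hx i
  have hbi : SignType.sign (b i) = v i := congrFun hb i
  rw [mem_supp] at hi
  cases hvi : v i with
  | zero => exact absurd hvi hi
  | pos =>
      rw [hvi] at hxi hbi
      rw [show (SignType.pos : SignType) = 1 from rfl] at hxi hbi ⊢
      rw [sign_eq_one_iff] at hbi
      rw [sign_or_iff_pos, sub_nonneg, le_div_iff₀ hbi]
  | neg =>
      rw [hvi] at hxi hbi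
      rw [show (SignType.neg : SignType) = -1 from rfl] at hxi hbi ⊢
      rw [sign_eq_neg_one_iff] at hbi
      rw [sign_or_iff_neg, sub_nonpos, le_div_iff_of_neg hbi]

lemma sub_smul_apply (x b : Fin n → ℝ) (μ : ℝ) (i : Fin n) :
    (x - μ • b) i = x i - μ * b i := by simp

lemma minRatio_pos {x b : Fin n → ℝ} {v : Fin n → SignType} (hx : sgn x = v)
    (hb : sgn b = v) (hv : v ≠ 0) : 0 < minRatio x b v := by
  have hne := supp_nonempty_of_ne hv
  rw [minRatio, dif_pos hne]
  rw [Finset.lt_inf'_iff]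
  exact fun i hi => ratio_pos hx hb hi

lemma minRatio_conf {x b : Fin n → ℝ} {v : Fin n → SignType} (hx : sgn x = v)
    (hb : sgn b = v) (hv : v ≠ 0) :
    Conf (sgn (x - minRatio x b v • b)) v := by
  have hne := supp_nonempty_of_ne hv
  intro i
  by_cases hi : i ∈ supp v
  · have h2 := (ratio_bound_iff hx hb hi (minRatio x b v)).2
      (by rw [minRatio, dif_pos hne]; exact Finset.inf'_le _ hi)
    simpa [sgn, sub_smul_apply] using h2
  · left
    rw [mem_supp, not_not] at hi
    have hxi : x i = 0 := sign_eq_zero_iff.1 (by simpa [sgn, hi] using congrFun hx i)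
    have hbi : b i = 0 := sign_eq_zero_iff.1 (by simpa [sgn, hi] using congrFun hb i)
    show SignType.sign ((x - minRatio x b v • b) i) = 0
    rw [sub_smul_apply, hxi, hbi]; simp

lemma minRatio_vanish {x b : Fin n → ℝ} {v : Fin n → SignType} (hx : sgn x = v)
    (hb : sgn b = v) (hv : v ≠ 0) :
    ∃ i, v i ≠ 0 ∧ (x - minRatio x b v • b) i = 0 := by
  have hne := supp_nonempty_of_ne hv
  obtain ⟨i, hi, heq⟩ := Finset.exists_mem_eq_inf' hne (fun i => x i / b i)
  refine ⟨i, mem_supp.1 hi, ?_⟩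
  have hbi : b i ≠ 0 := fun h =>
    (mem_supp.1 hi) (by simpa [sgn, h] using (congrFun hb i).symm)
  rw [sub_smul_apply, minRatio, dif_pos hne, heq, div_mul_cancel₀ _ hbi, sub_self]

lemma minRatio_unique {x b : Fin n → ℝ} {v : Fin n → SignType} (hx : sgn x = v)
    (hb : sgn b = v) (hv : v ≠ 0) {μ : ℝ}
    (hconf : Conf (sgn (x - μ • b)) v) (hvan : ∃ i, v i ≠ 0 ∧ (x - μ • b) i = 0) :
    μ = minRatio x b v := by
  have hne := supp_nonempty_of_ne hv
  rw [minRatio, dif_pos hne]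
  apply le_antisymm
  · rw [Finset.le_inf'_iff]
    intro i hi
    refine (ratio_bound_iff hx hb hi μ).1 ?_
    simpa [sgn, sub_smul_apply] using hconf i
  · obtain ⟨i, hi, hzero⟩ := hvan
    have hbi : b i ≠ 0 := fun h =>
      hi (by simpa [sgn, h] using (congrFun hb i).symm)
    have hμ : μ = x i / b i := by
      rw [sub_smul_apply] at hzero
      rw [eq_div_iff hbi]; linarith
    rw [hμ]
    exact Finset.inf'_le _ (mem_supp.2 hi)

def covectors (W : Submodule ℝ (Fin n → ℝ)) : Set (Fin n → SignType) :=
  {v | ∃ x ∈ W, sgn x = v}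

open Classical in
noncomputable def G (A B : Submodule ℝ (Fin n → ℝ)) : ℕ → (Fin n → ℝ) → (Fin n → ℝ)
  | 0, _ => 0
  | (k+1), x =>
      if x = 0 then 0 else
        minRatio x (pick A (sgn x)) (sgn x) • pick B (sgn x) +
          G A B k (x - minRatio x (pick A (sgn x)) (sgn x) • pick A (sgn x))

lemma G_zero (A B : Submodule ℝ (Fin n → ℝ)) (k : ℕ) : G A B k 0 = 0 := by
  cases k with
  | zero => rfl
  | succ k => classical rw [G, if_pos rfl]

lemma G_succ_ne (A B : Submodule ℝ (Fin n → ℝ)) (k : ℕ) {x : Fin n → ℝ} (hx : x ≠ 0) :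
    G A B (k+1) x = minRatio x (pick A (sgn x)) (sgn x) • pick B (sgn x) +
      G A B k (x - minRatio x (pick A (sgn x)) (sgn x) • pick A (sgn x)) := by
  classical rw [G, if_neg hx]

lemma supp_eq_empty_iff {v : Fin n → SignType} : supp v = ∅ ↔ v = 0 := by
  constructor
  · intro h; funext i
    by_contra hne
    exact absurd (mem_supp.2 hne) (by rw [h]; exact notMem_empty i)
  · rintro rfl; ext i; simp [mem_supp]

lemma eq_zero_of_card_le_zero {x : Fin n → ℝ} (h : (supp (sgn x)).card ≤ 0) : x = 0 := by
  rw [Nat.le_zero, Finset.card_eq_zero, supp_eq_empty_iff] at h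
  exact sgn_eq_zero_iff.1 h

/-- facts about one greedy step -/
lemma step_facts {A : Submodule ℝ (Fin n → ℝ)} {x : Fin n → ℝ} (hxA : x ∈ A)
    (hx0 : x ≠ 0) :
    let v := sgn x
    let b := pick A v
    let μ := minRatio x b v
    let rem := x - μ • b
    sgn b = v ∧ b ∈ A ∧ 0 < μ ∧ rem ∈ A ∧ Conf (sgn rem) v ∧
      (∃ i, v i ≠ 0 ∧ rem i = 0) ∧ (supp (sgn rem)).card < (supp v).card := by
  intro v b μ rem
  have hv0 : v ≠ 0 := fun h => hx0 (sgn_eq_zero_iff.1 h)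
  have hex : ∃ y ∈ A, sgn y = v := ⟨x, hxA, rfl⟩
  have hb : sgn b = v := pick_sgn hex
  have hbA : b ∈ A := pick_mem hex
  have hμ : 0 < μ := minRatio_pos rfl hb hv0
  have hremA : rem ∈ A := A.sub_mem hxA (A.smul_mem _ hbA)
  have hconf : Conf (sgn rem) v := minRatio_conf rfl hb hv0
  have hvan : ∃ i, v i ≠ 0 ∧ rem i = 0 := minRatio_vanish rfl hb hv0
  refine ⟨hb, hbA, hμ, hremA, hconf, hvan, ?_⟩
  apply Finset.card_lt_card
  apply hconf.ssubset_of_ne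
  obtain ⟨i, hi, hz⟩ := hvan
  intro heq
  exact hi (by rw [← heq]; show SignType.sign (rem i) = 0; rw [hz]; simp)

/-- the key inverse-step computation, with all components abstracted -/
lemma G_inv_step {A B : Submodule ℝ (Fin n → ℝ)} (k : ℕ)
    {x b b' rem z : Fin n → ℝ} {v : Fin n → SignType} {μ : ℝ}
    (hv : sgn x = v) (hv0 : v ≠ 0)
    (hbdef : b = pick A v) (hb'def : b' = pick B v)
    (hb' : sgn b' = v)
    (hμdef : μ = minRatio x b v) (hμ : 0 < μ)
    (hrem : rem = x - μ • b)
    (hzdef : z = G A B k rem)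
    (hzsgn : sgn z = sgn rem)
    (hconf : Conf (sgn rem) v)
    (hvan : ∃ i, v i ≠ 0 ∧ rem i = 0)
    (hzinv : G B A k z = rem)
    (hx0 : x ≠ 0) :
    G B A (k+1) (G A B (k+1) x) = x := by
  have hGx : G A B (k+1) x = μ • b' + z := by
    rw [G_succ_ne A B k hx0, hv, ← hbdef, ← hb'def, ← hμdef, ← hrem, ← hzdef]
  have hμb' : sgn (μ • b') = v := by rw [sgn_smul_of_pos hμ, hb']
  have hconfz : Conf (sgn z) v := by rw [hzsgn]; exact hconf
  have hysgn : sgn (μ • b' + z) = v := sgn_add_of_conf hμb' hconfz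
  have hy0 : μ • b' + z ≠ 0 := by
    intro h
    rw [h, sgn_eq_zero_iff.2 rfl] at hysgn
    exact hv0 hysgn.symm
  have hzrem : (μ • b' + z) - μ • b' = z := add_sub_cancel_left _ _
  have hvanz : ∃ i, v i ≠ 0 ∧ ((μ • b' + z) - μ • b') i = 0 := by
    obtain ⟨i, hi, hz0⟩ := hvan
    refine ⟨i, hi, ?_⟩
    rw [hzrem]
    exact sign_eq_zero_iff.1 (by simpa [sgn, hz0] using congrFun hzsgn i)
  have hμ' : μ = minRatio (μ • b' + z) b' v := by
    apply minRatio_unique hysgn hb' hv0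
    · rw [hzrem]; exact hconfz
    · exact hvanz
  rw [hGx, G_succ_ne B A k hy0, hysgn, ← hb'def, ← hbdef, ← hμ', hzrem, hzinv, hrem,
    add_comm, sub_add_cancel]

/-- membership, sign preservation, and two-sided inverse, by induction on fuel -/
lemma G_spec : ∀ k (A B : Submodule ℝ (Fin n → ℝ)),
    covectors A = covectors B → ∀ x ∈ A, (supp (sgn x)).card ≤ k →
    G A B k x ∈ B ∧ sgn (G A B k x) = sgn x ∧ G B A k (G A B k x) = x := by
  intro k
  induction k with
  | zero =>
      intro A B _ x _ hcard
      obtain rfl := eq_zero_of_card_le_zero hcard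
      refine ⟨by simp [G], by simp [G], by simp [G, G_zero]⟩
  | succ k IH =>
      intro A B hAB x hxA hcard
      by_cases hx0 : x = 0
      · subst hx0
        refine ⟨by simp [G_zero], by simp [G_zero], by simp [G_zero]⟩
      · have hv0 : sgn x ≠ 0 := fun h => hx0 (sgn_eq_zero_iff.1 h)
        obtain ⟨hb, hbA, hμ, hremA, hconf, hvan, hcardlt⟩ := step_facts hxA hx0
        have hvB : sgn x ∈ covectors B := hAB ▸ ⟨x, hxA, rfl⟩
        have hb' : sgn (pick B (sgn x)) = sgn x := pick_sgn hvB
        have hb'B : pick B (sgn x) ∈ B := pick_mem hvB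
        have hcard' :
            (supp (sgn (x - minRatio x (pick A (sgn x)) (sgn x) • pick A (sgn x)))).card ≤ k := by
          omega
        obtain ⟨hzB, hzsgn, hzinv⟩ := IH A B hAB _ hremA hcard'
        refine ⟨?_, ?_, ?_⟩
        · rw [G_succ_ne A B k hx0]
          exact B.add_mem (B.smul_mem _ hb'B) hzB
        · rw [G_succ_ne A B k hx0]
          exact sgn_add_of_conf (by rw [sgn_smul_of_pos hμ, hb'])
            (by rw [hzsgn]; exact hconf)
        · exact G_inv_step k rfl hv0 rfl rfl hb' rfl hμ rfl rfl hzsgn hconf hvan hzinv hx0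

lemma G_stab_succ : ∀ k (A B : Submodule ℝ (Fin n → ℝ)) x, x ∈ A →
    (supp (sgn x)).card ≤ k → G A B (k+1) x = G A B k x := by
  intro k
  induction k with
  | zero =>
      intro A B x _ hcard
      obtain rfl := eq_zero_of_card_le_zero hcard
      simp [G_zero]
  | succ k IH =>
      intro A B x hxA hcard
      by_cases hx0 : x = 0
      · subst hx0; simp [G_zero]
      · obtain ⟨hb, hbA, hμ, hremA, hconf, hvan, hcardlt⟩ := step_facts hxA hx0
        rw [G_succ_ne A B (k+1) hx0, G_succ_ne A B k hx0]
        congr 1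
        exact IH A B _ hremA (by omega)

lemma G_stab : ∀ {k m : ℕ}, k ≤ m → ∀ (A B : Submodule ℝ (Fin n → ℝ)) x, x ∈ A →
    (supp (sgn x)).card ≤ k → G A B m x = G A B k x := by
  intro k m hkm
  induction m, hkm using Nat.le_induction with
  | base => intro A B x _ _; rfl
  | succ m hkm IH =>
      intro A B x hxA hcard
      rw [G_stab_succ m A B x hxA (le_trans hcard hkm), IH A B x hxA hcard]

def GoodChain (A : Submodule ℝ (Fin n → ℝ)) (t : Finset (Fin n → SignType)) : Prop :=
  (∀ v ∈ t, v ∈ covectors A ∧ v ≠ 0) ∧ ∀ v ∈ t, ∀ w ∈ t, Conf v w ∨ Conf w v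

lemma GoodChain.subset {A : Submodule ℝ (Fin n → ℝ)} {s t : Finset (Fin n → SignType)}
    (h : GoodChain A t) (hst : s ⊆ t) : GoodChain A s :=
  ⟨fun v hv => h.1 v (hst hv), fun v hv w hw => h.2 v (hst hv) w (hst hw)⟩

lemma chain_top {A : Submodule ℝ (Fin n → ℝ)} {t : Finset (Fin n → SignType)}
    (h : GoodChain A t) (hne : t.Nonempty) :
    ∃ m ∈ t, ∀ w ∈ t, supp w ⊆ supp m ∧ Conf w m := by
  obtain ⟨m, hm, hmax⟩ := Finset.exists_max_image t (fun v => (supp v).card) hne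
  refine ⟨m, hm, fun w hw => ?_⟩
  rcases h.2 w hw m hm with hc | hc
  · exact ⟨hc.supp_subset, hc⟩
  · have heq : supp m = supp w :=
      Finset.eq_of_subset_of_card_le hc.supp_subset (hmax w hw)
    have : m = w := hc.eq_of_supp_subset (le_of_eq heq.symm)
    subst this
    exact ⟨subset_rfl, Conf.refl m⟩

lemma coord_zero_of_sgn {u : Fin n → ℝ} {v : Fin n → SignType} (hu : sgn u = v)
    {i : Fin n} (hi : v i = 0) : u i = 0 :=
  sign_eq_zero_iff.1 (by rw [← hi, ← hu]; rfl)

lemma coord_ne_zero_of_sgn {u : Fin n → ℝ} {v : Fin n → SignType} (hu : sgn u = v)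
    {i : Fin n} (hi : v i ≠ 0) : u i ≠ 0 := by
  intro h
  exact hi (by rw [← hu]; show SignType.sign (u i) = 0; rw [h]; simp)

lemma chain_witness {A : Submodule ℝ (Fin n → ℝ)} {t : Finset (Fin n → SignType)}
    (h : GoodChain A t) {m : Fin n → SignType} (hm : m ∈ t)
    (htop : ∀ w ∈ t, supp w ⊆ supp m ∧ Conf w m) :
    ∃ i, m i ≠ 0 ∧ ∀ w ∈ t.erase m, w i = 0 := by
  by_cases hne : (t.erase m).Nonempty
  · obtain ⟨w₀, hw₀, hsub⟩ := chain_top (h.subset (Finset.erase_subset m t)) hne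
    have hw₀m : w₀ ≠ m := (Finset.mem_erase.1 hw₀).1
    have hw₀t : w₀ ∈ t := Finset.mem_of_mem_erase hw₀
    have hss : supp w₀ ⊂ supp m :=
      ((htop w₀ hw₀t).2).ssubset_of_ne hw₀m
    obtain ⟨i, him, hiw⟩ := Finset.exists_of_ssubset hss
    refine ⟨i, mem_supp.1 him, fun w hw => ?_⟩
    have : i ∉ supp w := fun hi => hiw ((hsub w hw).1 hi)
    rw [mem_supp, not_not] at this
    exact this
  · have hm0 : m ≠ 0 := (h.1 m hm).2
    obtain ⟨i, hi⟩ := supp_nonempty_of_ne hm0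
    exact ⟨i, mem_supp.1 hi, fun w hw => absurd ⟨w, hw⟩ hne⟩

lemma chain_indep {A : Submodule ℝ (Fin n → ℝ)} :
    ∀ (N : ℕ) (t : Finset (Fin n → SignType)), t.card ≤ N → GoodChain A t →
    ∀ c : (Fin n → SignType) → ℝ, ∑ v ∈ t, c v • pick A v = 0 → ∀ v ∈ t, c v = 0 := by
  intro N
  induction N with
  | zero =>
      intro t hcard _ c _ v hv
      rw [Nat.le_zero, Finset.card_eq_zero] at hcard
      subst hcard; exact absurd hv (Finset.notMem_empty v)
  | succ N IH =>
      intro t hcard hgc c hsum v hv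
      have hne : t.Nonempty := ⟨v, hv⟩
      obtain ⟨m, hm, htop⟩ := chain_top hgc hne
      obtain ⟨i, hmi, hzero⟩ := chain_witness hgc hm htop
      have hmA : sgn (pick A m) = m := pick_sgn (hgc.1 m hm).1
      have hpick_ne : pick A m i ≠ 0 := coord_ne_zero_of_sgn hmA hmi
      have hsum_i : ∑ w ∈ t, c w * pick A w i = 0 := by
        have := congrFun hsum i
        simpa using this
      have hothers : ∀ w ∈ t.erase m, c w * pick A w i = 0 := by
        intro w hw
        have hwA : sgn (pick A w) = w := pick_sgn (hgc.1 w (Finset.mem_of_mem_erase hw)).1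
        rw [coord_zero_of_sgn hwA (hzero w hw), mul_zero]
      have hsplit : c m * pick A m i + ∑ w ∈ t.erase m, c w * pick A w i = 0 := by
        rwa [Finset.add_sum_erase t (fun w => c w * pick A w i) hm]
      have hcm : c m = 0 := by
        rw [Finset.sum_eq_zero hothers, add_zero] at hsplit
        exact (mul_eq_zero.1 hsplit).resolve_right hpick_ne
      have hsum' : ∑ w ∈ t.erase m, c w • pick A w = 0 := by
        have h2 : c m • pick A m + ∑ w ∈ t.erase m, c w • pick A w = 0 := by
          rw [Finset.add_sum_erase t (fun w => c w • pick A w) hm]; exact hsum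
        rwa [hcm, zero_smul, zero_add] at h2
      have hIH := IH (t.erase m) (by
          have := Finset.card_erase_of_mem hm
          omega) (hgc.subset (Finset.erase_subset m t)) c hsum'
      by_cases hvm : v = m
      · rw [hvm]; exact hcm
      · exact hIH v (Finset.mem_erase.2 ⟨hvm, hv⟩)

lemma conf_smul {u : Fin n → ℝ} {w : Fin n → SignType} {c : ℝ} (hc : 0 ≤ c)
    (h : Conf (sgn u) w) : Conf (sgn (c • u)) w := by
  rcases eq_or_lt_of_le hc with h0 | h0
  · subst h0
    intro i; left
    show SignType.sign ((0 • u) i) = 0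
    simp
  · rwa [sgn_smul_of_pos h0]

lemma conf_sum {ι : Type*} {s : Finset ι} {f : ι → Fin n → ℝ} {w : Fin n → SignType}
    (h : ∀ j ∈ s, Conf (sgn (f j)) w) : Conf (sgn (∑ j ∈ s, f j)) w := by
  intro i
  have happ : (∑ j ∈ s, f j) i = ∑ j ∈ s, f j i := by simp
  have hterm : ∀ j ∈ s, SignType.sign (f j i) = 0 ∨ SignType.sign (f j i) = w i := by
    intro j hj
    rcases h j hj i with h0 | h0
    · exact Or.inl (by simpa [sgn] using h0)
    · exact Or.inr (by simpa [sgn] using h0)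
  have key : SignType.sign ((∑ j ∈ s, f j) i) = 0 ∨
      SignType.sign ((∑ j ∈ s, f j) i) = w i := by
    cases hwi : w i with
    | zero =>
        left
        rw [happ, sign_eq_zero_iff]
        apply Finset.sum_eq_zero
        intro j hj
        rcases hterm j hj with h0 | h0
        · exact sign_eq_zero_iff.1 h0
        · exact sign_eq_zero_iff.1 (h0.trans hwi)
    | pos =>
        rw [show (SignType.pos : SignType) = 1 from rfl]
        rw [sign_or_iff_pos, happ]
        apply Finset.sum_nonneg
        intro j hj
        rw [← sign_or_iff_pos]
        rcases hterm j hj with h0 | h0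
        · exact Or.inl h0
        · exact Or.inr (h0.trans hwi)
    | neg =>
        rw [show (SignType.neg : SignType) = -1 from rfl]
        rw [sign_or_iff_neg, happ]
        apply Finset.sum_nonpos
        intro j hj
        rw [← sign_or_iff_neg]
        rcases hterm j hj with h0 | h0
        · exact Or.inl h0
        · exact Or.inr (h0.trans hwi)
  exact key

lemma G_cone {A B : Submodule ℝ (Fin n → ℝ)} (hAB : covectors A = covectors B) :
    ∀ (N k : ℕ) (t : Finset (Fin n → SignType)), t.card ≤ N → GoodChain A t →
    (∀ v ∈ t, (supp v).card ≤ k) → ∀ lam : (Fin n → SignType) → ℝ, (∀ v, 0 ≤ lam v) →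
    G A B k (∑ v ∈ t, lam v • pick A v) = ∑ v ∈ t, lam v • pick B v := by
  intro N
  induction N with
  | zero =>
      intro k t hcard _ _ lam _
      rw [Nat.le_zero, Finset.card_eq_zero] at hcard
      subst hcard
      simp [G_zero]
  | succ N IH =>
      intro k t hcard hgc hsupp lam hlam
      rcases t.eq_empty_or_nonempty with rfl | hne
      · simp [G_zero]
      obtain ⟨m, hm, htop⟩ := chain_top hgc hne
      have hmcovA := (hgc.1 m hm).1
      have hm0 := (hgc.1 m hm).2
      have hbm : sgn (pick A m) = m := pick_sgn hmcovA
      have hgc' := hgc.subset (Finset.erase_subset m t)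
      have hcard' : (t.erase m).card ≤ N := by
        have := Finset.card_erase_of_mem hm
        have := Finset.card_pos.2 hne
        omega
      have hsplitA : lam m • pick A m + ∑ w ∈ t.erase m, lam w • pick A w
          = ∑ w ∈ t, lam w • pick A w :=
        Finset.add_sum_erase t (fun w => lam w • pick A w) hm
      have hsplitB : lam m • pick B m + ∑ w ∈ t.erase m, lam w • pick B w
          = ∑ w ∈ t, lam w • pick B w :=
        Finset.add_sum_erase t (fun w => lam w • pick B w) hm
      have hconfy : Conf (sgn (∑ w ∈ t.erase m, lam w • pick A w)) m := by
        apply conf_sum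
        intro w hw
        apply conf_smul (hlam w)
        rw [pick_sgn (hgc.1 w (Finset.mem_of_mem_erase hw)).1]
        exact (htop w (Finset.mem_of_mem_erase hw)).2
      have hsuppcards : ∀ w ∈ t.erase m, (supp w).card < (supp m).card := by
        intro w hw
        exact Finset.card_lt_card
          (((htop w (Finset.mem_of_mem_erase hw)).2).ssubset_of_ne (Finset.mem_erase.1 hw).1)
      rcases eq_or_lt_of_le (hlam m) with h0 | h0
      · rw [← hsplitA, ← hsplitB, ← h0, zero_smul, zero_smul, zero_add, zero_add]
        exact IH k (t.erase m) hcard' hgc'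
          (fun v hv => hsupp v (Finset.mem_of_mem_erase hv)) lam hlam
      · have hsgn_lm : sgn (lam m • pick A m) = m := by rw [sgn_smul_of_pos h0, hbm]
        have hsgnx : sgn (∑ w ∈ t, lam w • pick A w) = m := by
          rw [← hsplitA]; exact sgn_add_of_conf hsgn_lm hconfy
        have hksupp : (supp m).card ≤ k := hsupp m hm
        have hsm : 0 < (supp m).card := Finset.card_pos.2 (supp_nonempty_of_ne hm0)
        cases k with
        | zero => omega
        | succ k' =>
          have hx0 : (∑ w ∈ t, lam w • pick A w) ≠ 0 := fun h =>
            hm0 (by rw [← hsgnx, h, sgn_eq_zero_iff.2 rfl])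
          obtain ⟨i, hmi, hzero⟩ := chain_witness hgc hm htop
          have hrem : (∑ w ∈ t, lam w • pick A w) - lam m • pick A m
              = ∑ w ∈ t.erase m, lam w • pick A w := by
            rw [← hsplitA, add_sub_cancel_left]
          have hyvan : (∑ w ∈ t.erase m, lam w • pick A w) i = 0 := by
            simp only [Finset.sum_apply, Pi.smul_apply, smul_eq_mul]
            apply Finset.sum_eq_zero
            intro w hw
            rw [coord_zero_of_sgn (pick_sgn (hgc.1 w (Finset.mem_of_mem_erase hw)).1)
              (hzero w hw), mul_zero]
          have hμ : lam m = minRatio (∑ w ∈ t, lam w • pick A w) (pick A m) m := by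
            apply minRatio_unique hsgnx hbm hm0
            · rw [hrem]; exact hconfy
            · exact ⟨i, hmi, by rw [hrem]; exact hyvan⟩
          rw [G_succ_ne A B k' hx0, hsgnx, ← hμ, hrem]
          rw [IH k' (t.erase m) hcard' hgc'
            (fun v hv => by have := hsuppcards v hv; omega) lam hlam]
          rw [← hsplitB]

lemma cover {A : Submodule ℝ (Fin n → ℝ)} :
    ∀ (k : ℕ) (x : Fin n → ℝ), x ∈ A → (supp (sgn x)).card ≤ k →
    ∃ (t : Finset (Fin n → SignType)) (lam : (Fin n → SignType) → ℝ), GoodChain A t ∧ (∀ w ∈ t, Conf w (sgn x)) ∧ (∀ v, 0 ≤ lam v) ∧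
      x = ∑ v ∈ t, lam v • pick A v := by
  intro k
  induction k with
  | zero =>
      intro x _ hcard
      obtain rfl := eq_zero_of_card_le_zero hcard
      exact ⟨∅, 0, ⟨by simp, by simp⟩, by simp, fun v => le_refl 0, by simp⟩
  | succ k IH =>
      intro x hxA hcard
      by_cases hx0 : x = 0
      · subst hx0
        exact ⟨∅, 0, ⟨by simp, by simp⟩, by simp, fun v => le_refl 0, by simp⟩
      · obtain ⟨hb, hbA, hμ, hremA, hconf, hvan, hcardlt⟩ := step_facts hxA hx0
        obtain ⟨t, lam, hgc, hconfall, hlam, hsum⟩ := IH _ hremA (by omega)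
        have hvx : sgn x ∈ covectors A := ⟨x, hxA, rfl⟩
        have hconfx : ∀ w ∈ t, Conf w (sgn x) := fun w hw =>
          (hconfall w hw).trans hconf
        have hnotmem : sgn x ∉ t := by
          intro hmem
          have h1 := Finset.card_le_card (hconfall _ hmem).supp_subset
          omega
        classical
        refine ⟨insert (sgn x) t,
          fun v => if v = sgn x then minRatio x (pick A (sgn x)) (sgn x) else lam v,
          ⟨?_, ?_⟩, ?_, ?_, ?_⟩
        · intro v hv
          rcases Finset.mem_insert.1 hv with rfl | hv
          · exact ⟨hvx, fun h => hx0 (sgn_eq_zero_iff.1 h)⟩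
          · exact hgc.1 v hv
        · intro v hv w hw
          rcases Finset.mem_insert.1 hv with rfl | hv <;>
            rcases Finset.mem_insert.1 hw with heq | hw
          · rw [heq]; exact Or.inl (Conf.refl _)
          · exact Or.inr (hconfx w hw)
          · rw [heq]; exact Or.inl (hconfx v hv)
          · exact hgc.2 v hv w hw
        · intro w hw
          rcases Finset.mem_insert.1 hw with rfl | hw
          · exact Conf.refl _
          · exact hconfx w hw
        · intro v
          dsimp only
          split
          · exact le_of_lt hμ
          · exact hlam v
        · rw [Finset.sum_insert hnotmem]
          dsimp only
          rw [if_pos rfl]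
          have hre : ∀ v ∈ t,
              (if v = sgn x then minRatio x (pick A (sgn x)) (sgn x) else lam v) • pick A v
              = lam v • pick A v := by
            intro v hv
            rw [if_neg (show ¬ v = sgn x from fun h => hnotmem (h ▸ hv))]
          rw [Finset.sum_congr rfl hre, ← hsum]
          rw [add_sub_cancel]

noncomputable def Phi (A : Submodule ℝ (Fin n → ℝ)) (t : Finset (Fin n → SignType)) :
    ((Fin n → SignType) → ℝ) →ₗ[ℝ] (Fin n → ℝ) where
  toFun lam := ∑ v ∈ t, lam v • pick A v
  map_add' a b := by simp [add_smul, Finset.sum_add_distrib]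
  map_smul' c a := by simp [smul_smul, Finset.smul_sum]

def Kt (t : Finset (Fin n → SignType)) : Submodule ℝ ((Fin n → SignType) → ℝ) :=
  Submodule.pi {v | v ∉ t} (fun _ => ⊥)

lemma mem_Kt {t : Finset (Fin n → SignType)} {lam : (Fin n → SignType) → ℝ} :
    lam ∈ Kt t ↔ ∀ v ∉ t, lam v = 0 := by
  simp [Kt, Submodule.mem_pi]

/-- the closed cone spanned by the picked representatives of a chain -/
def sigmaCone (A : Submodule ℝ (Fin n → ℝ)) (t : Finset (Fin n → SignType)) :
    Set (Fin n → ℝ) :=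
  {x | ∃ lam : (Fin n → SignType) → ℝ, (∀ v, 0 ≤ lam v) ∧ x = ∑ v ∈ t, lam v • pick A v}

lemma sigmaCone_eq_image (A : Submodule ℝ (Fin n → ℝ)) (t : Finset (Fin n → SignType)) :
    sigmaCone A t =
      ((Phi A t).domRestrict (Kt t)) '' {l : Kt t | ∀ v, 0 ≤ (l : (Fin n → SignType) → ℝ) v} := by
  classical
  ext x
  constructor
  · rintro ⟨lam, hlam, rfl⟩
    refine ⟨⟨fun v => if v ∈ t then lam v else 0, ?_⟩, ?_, ?_⟩
    · rw [mem_Kt]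
      intro v hv
      rw [if_neg hv]
    · intro v
      dsimp only
      split
      · exact hlam _
      · exact le_refl 0
    · show (Phi A t) _ = _
      show ∑ v ∈ t, (if v ∈ t then lam v else 0) • pick A v = _
      exact Finset.sum_congr rfl fun v hv => by rw [if_pos hv]
  · rintro ⟨l, hl, rfl⟩
    exact ⟨(l : (Fin n → SignType) → ℝ), hl, rfl⟩

lemma Phi_domRestrict_injective {A : Submodule ℝ (Fin n → ℝ)}
    {t : Finset (Fin n → SignType)} (hgc : GoodChain A t) :
    Function.Injective ((Phi A t).domRestrict (Kt t)) := by
  intro a b hab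
  have hc : (Phi A t) ((a : (Fin n → SignType) → ℝ) - b) = 0 := by
    rw [map_sub]
    rw [LinearMap.domRestrict_apply, LinearMap.domRestrict_apply] at hab
    rw [hab, sub_self]
  have hzero : ∀ v ∈ t, ((a : (Fin n → SignType) → ℝ) - b) v = 0 :=
    chain_indep t.card t (le_refl _) hgc _ hc
  have : (a : (Fin n → SignType) → ℝ) - b = 0 := by
    funext v
    by_cases hv : v ∈ t
    · exact hzero v hv
    · show (a : (Fin n → SignType) → ℝ) v - (b : (Fin n → SignType) → ℝ) v = 0
      rw [mem_Kt.1 a.2 v hv, mem_Kt.1 b.2 v hv, sub_self]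
  exact Subtype.ext (sub_eq_zero.1 this)

lemma nonnegSet_closed (t : Finset (Fin n → SignType)) :
    IsClosed {l : Kt t | ∀ v, 0 ≤ (l : (Fin n → SignType) → ℝ) v} := by
  have : {l : Kt t | ∀ v, 0 ≤ (l : (Fin n → SignType) → ℝ) v} =
      ⋂ v, {l : Kt t | 0 ≤ (l : (Fin n → SignType) → ℝ) v} := by
    ext l; simp [Set.mem_iInter]
  rw [this]
  exact isClosed_iInter fun v =>
    isClosed_le continuous_const ((continuous_apply v).comp continuous_subtype_val)

lemma sigmaCone_closed {A : Submodule ℝ (Fin n → ℝ)} {t : Finset (Fin n → SignType)}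
    (hgc : GoodChain A t) : IsClosed (sigmaCone A t) := by
  rw [sigmaCone_eq_image]
  have hce := LinearMap.isClosedEmbedding_of_injective
    (LinearMap.ker_eq_bot.2 (Phi_domRestrict_injective hgc))
  exact hce.isClosedMap _ (nonnegSet_closed t)

lemma supp_card_le (v : Fin n → SignType) : (supp v).card ≤ n := by
  calc (supp v).card ≤ Finset.univ.card := Finset.card_le_univ _
  _ = n := by simp

lemma contOn_sigmaCone {A B : Submodule ℝ (Fin n → ℝ)} (hAB : covectors A = covectors B)
    {t : Finset (Fin n → SignType)} (hgc : GoodChain A t) :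
    ContinuousOn (G A B n) (sigmaCone A t) := by
  rw [continuousOn_iff_continuous_restrict]
  set e := (Phi A t).domRestrict (Kt t) with he_def
  have hinj : Function.Injective e := Phi_domRestrict_injective hgc
  have hce := LinearMap.isClosedEmbedding_of_injective (LinearMap.ker_eq_bot.2 hinj)
  set h := Topology.IsEmbedding.toHomeomorph (f := e) hce.isEmbedding with hh_def
  have hsub : sigmaCone A t ⊆ Set.range e := by
    rw [sigmaCone_eq_image]
    exact Set.image_subset_range _ _
  have heq : Set.restrict (sigmaCone A t) (G A B n) =
      (fun l : Kt t => ∑ v ∈ t, (l : (Fin n → SignType) → ℝ) v • pick B v) ∘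
        h.symm ∘ (Set.inclusion hsub) := by
    funext p
    obtain ⟨x, hx⟩ := p
    set q := h.symm (Set.inclusion hsub ⟨x, hx⟩) with hq_def
    have heval : e q = x := by
      have h1 := h.apply_symm_apply (Set.inclusion hsub ⟨x, hx⟩)
      have h2 := congrArg Subtype.val h1
      exact h2
    obtain ⟨l₀, hl₀, hxl⟩ := (sigmaCone_eq_image A t ▸ hx :
      x ∈ e '' {l : Kt t | ∀ v, 0 ≤ (l : (Fin n → SignType) → ℝ) v})
    have hql : q = l₀ := hinj (by rw [heval, hxl])
    show G A B n x = ∑ v ∈ t, (q : (Fin n → SignType) → ℝ) v • pick B v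
    rw [hql, ← hxl]
    show G A B n (∑ v ∈ t, (l₀ : (Fin n → SignType) → ℝ) v • pick A v) = _
    exact G_cone hAB t.card n t (le_refl _) hgc (fun v _ => supp_card_le v) _ hl₀
  rw [show Set.domRestrict (sigmaCone A t) (G A B n) = _ from heq]
  apply Continuous.comp
  · exact continuous_finset_sum _ fun v _ =>
      ((continuous_apply v).comp continuous_subtype_val).smul continuous_const
  · exact h.symm.continuous.comp (continuous_inclusion hsub)

lemma contOn_G {A B : Submodule ℝ (Fin n → ℝ)} (hAB : covectors A = covectors B) :
    ContinuousOn (G A B n) (A : Set (Fin n → ℝ)) := by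
  classical
  have hfin : Finite {t : Finset (Fin n → SignType) // GoodChain A t} := by
    infer_instance
  apply ContinuousOn.mono
    (s := ⋃ (i : {t : Finset (Fin n → SignType) // GoodChain A t}), sigmaCone A i.1)
  · exact (locallyFinite_of_finite _).continuousOn_iUnion
      (fun i => sigmaCone_closed i.2) (fun i => contOn_sigmaCone hAB i.2)
  · intro x hx
    obtain ⟨t, lam, hgc, _, hlam, hsum⟩ := cover n x hx (supp_card_le _)
    exact Set.mem_iUnion.2 ⟨⟨t, hgc⟩, lam, hlam, hsum⟩

end SignHomeo

/-- Proposition 5 (strong equivalence equals weak equivalence), mathematical content: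
two linear subspaces of `ℝⁿ` with the same set of componentwise sign vectors admit a
sign-preserving homeomorphism. -/
theorem sign_preserving_homeomorph_of_same_sign_vectors
    (n : ℕ) (S S' : Submodule ℝ (Fin n → ℝ))
    (hsign :
      {v : Fin n → SignType | ∃ x ∈ S, ∀ i, SignType.sign (x i) = v i} =
      {v : Fin n → SignType | ∃ x ∈ S', ∀ i, SignType.sign (x i) = v i}) :
    ∃ h : S ≃ₜ S', ∀ (x : S) (i : Fin n),
      SignType.sign ((h x : Fin n → ℝ) i) = SignType.sign ((x : Fin n → ℝ) i) := by
  open SignHomeo in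
  have e1 : ∀ (W : Submodule ℝ (Fin n → ℝ)),
      covectors W = {v : Fin n → SignType | ∃ x ∈ W, ∀ i, SignType.sign (x i) = v i} := by
    intro W
    ext v
    simp only [covectors, Set.mem_setOf_eq, sgn, funext_iff]
  have hAB : SignHomeo.covectors S = SignHomeo.covectors S' :=
    (e1 S).trans (hsign.trans (e1 S').symm)
  have spec := fun (x : Fin n → ℝ) (hx : x ∈ S) =>
    SignHomeo.G_spec n S S' hAB x hx (SignHomeo.supp_card_le _)
  have spec' := fun (y : Fin n → ℝ) (hy : y ∈ S') =>
    SignHomeo.G_spec n S' S hAB.symm y hy (SignHomeo.supp_card_le _)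
  refine ⟨⟨⟨fun x => ⟨SignHomeo.G S S' n x, (spec x x.2).1⟩,
      fun y => ⟨SignHomeo.G S' S n y, (spec' y y.2).1⟩,
      fun x => Subtype.ext (spec x x.2).2.2,
      fun y => Subtype.ext (spec' y y.2).2.2⟩, ?_, ?_⟩, ?_⟩
  · exact Continuous.subtype_mk
      ((SignHomeo.contOn_G hAB).comp_continuous continuous_subtype_val (fun x => x.2)) _
  · exact Continuous.subtype_mk
      ((SignHomeo.contOn_G hAB.symm).comp_continuous continuous_subtype_val (fun y => y.2)) _
  · intro x i
    exact congrFun ((spec x x.2).2.1) i
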